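/- Let G be a finite group and let π₁(G) be the set of primes p such that some minimal non-abelian subgroup H of G has H' a p-group. Then G = K ⋊ A where K is a normal Hall π₁(G)-subgroup and A is an abelian Hall π₁(G)'-subgroup. -/

import Mathlib

/-- A subgroup is minimal non-abelian if it is non-abelian and all its proper
subgroups are abelian. -/
def IsMinNonab (G : Type*) [Group G] (H : Subgroup G) : Prop :=
  ¬ IsMulCommutative H ∧ ∀ K : Subgroup G, K < H → IsMulCommutative K

/-- `pi1 G` : the set of primes `p` such that some minimal non-abelian subgroup of `G`
has commutator subgroup a `p`-group. -/
def pi1 (G : Type*) [Group G] : Set ℕ :=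
  {p | p.Prime ∧ ∃ H : Subgroup G, IsMinNonab G H ∧ IsPGroup p ↥⁅H, H⁆}

section Aux

open scoped commutatorElement

variable {G : Type*} [Group G] [Finite G]

lemma card_lt_of_lt {K M : Subgroup G} (h : K < M) : Nat.card K < Nat.card M := by
  refine lt_of_le_of_ne (Nat.le_of_dvd Nat.card_pos (Subgroup.card_dvd_of_le h.le)) fun he => ?_
  have hsub : (K : Set G) ⊆ (M : Set G) := h.le
  have hcard : (M : Set G).ncard ≤ (K : Set G).ncard := by
    rw [← Nat.card_coe_set_eq, ← Nat.card_coe_set_eq]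
    simp only [SetLike.coe_sort_coe]
    omega
  exact h.ne (SetLike.coe_injective (Set.eq_of_subset_of_ncard_le hsub hcard))

lemma exists_minNonab {X : Subgroup G} (hX : ¬ IsMulCommutative X) :
    ∃ M : Subgroup G, M ≤ X ∧ IsMinNonab G M := by
  set S : Set ℕ := {n | ∃ M : Subgroup G, M ≤ X ∧ ¬ IsMulCommutative M ∧ Nat.card M = n} with hS
  have hSne : S.Nonempty := ⟨Nat.card X, X, le_rfl, hX, rfl⟩
  obtain ⟨M, hMX, hMc, hMcard⟩ := Nat.sInf_mem hSne
  refine ⟨M, hMX, hMc, fun K hK => ?_⟩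
  by_contra hKc
  have hmem : Nat.card K ∈ S := ⟨K, hK.le.trans hMX, hKc, rfl⟩
  have h1 := Nat.sInf_le hmem
  have h2 := card_lt_of_lt hK
  omega

lemma mem_pi1_of_commutator_le {r : ℕ} (hrp : r.Prime) {R X : Subgroup G}
    (hR : IsPGroup r R) (hcomm : ⁅X, X⁆ ≤ R) (hX : ¬ IsMulCommutative X) : r ∈ pi1 G := by
  obtain ⟨M, hMX, hM⟩ := exists_minNonab hX
  exact ⟨hrp, M, hM, hR.to_le ((Subgroup.commutator_mono hMX hMX).trans hcomm)⟩

lemma norm_le_cent {r : ℕ} (hrp : r.Prime) (hr : r ∉ pi1 G) {R : Subgroup G}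
    (hR : IsPGroup r R) : Subgroup.normalizer (R : Set G) ≤ Subgroup.centralizer (R : Set G) := by
  intro g hg
  have hgX : g ∈ R ⊔ Subgroup.zpowers g := Subgroup.mem_sup_right (Subgroup.mem_zpowers g)
  have hcomm : ⁅R ⊔ Subgroup.zpowers g, R ⊔ Subgroup.zpowers g⁆ ≤ R := by
    set N := Subgroup.normalizer (R : Set G) with hN
    haveI : (R.subgroupOf N).Normal := Subgroup.normal_in_normalizer
    set q : N →* N ⧸ R.subgroupOf N := QuotientGroup.mk' _ with hq
    set t : N ⧸ R.subgroupOf N := q ⟨g, hg⟩ with ht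
    have key : ∀ z ∈ R ⊔ Subgroup.zpowers g,
        ∃ hz : z ∈ N, q ⟨z, hz⟩ ∈ Subgroup.zpowers t := by
      intro z hz
      rw [Subgroup.sup_eq_closure] at hz
      induction hz using Subgroup.closure_induction with
      | mem x hx =>
        rcases hx with hx | hx
        · refine ⟨Subgroup.le_normalizer hx, ?_⟩
          have h1 : q ⟨x, Subgroup.le_normalizer hx⟩ = 1 :=
            (QuotientGroup.eq_one_iff _).2 (Subgroup.mem_subgroupOf.2 hx)
          rw [h1]; exact one_mem _
        · obtain ⟨k, hk⟩ := Subgroup.mem_zpowers_iff.1 hx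
          have hxN : x ∈ N := Subgroup.zpowers_le.2 hg hx
          refine ⟨hxN, ?_⟩
          have h2 : (⟨x, hxN⟩ : N) = (⟨g, hg⟩ : N) ^ k := by
            ext; simp [← hk]
          rw [h2, map_zpow]
          exact zpow_mem (Subgroup.mem_zpowers t) k
      | one =>
        refine ⟨one_mem N, ?_⟩
        have h1 : ((⟨1, one_mem N⟩ : N)) = 1 := rfl
        rw [h1, map_one]; exact one_mem _
      | mul x y hx' hy' ihx ihy =>
        obtain ⟨hxN, px⟩ := ihx
        obtain ⟨hyN, py⟩ := ihy
        refine ⟨mul_mem hxN hyN, ?_⟩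
        have h1 : (⟨x * y, mul_mem hxN hyN⟩ : N) = ⟨x, hxN⟩ * ⟨y, hyN⟩ := rfl
        rw [h1, map_mul]
        exact mul_mem px py
      | inv x hx' ihx =>
        obtain ⟨hxN, px⟩ := ihx
        refine ⟨inv_mem hxN, ?_⟩
        have h1 : (⟨x⁻¹, inv_mem hxN⟩ : N) = (⟨x, hxN⟩ : N)⁻¹ := rfl
        rw [h1, map_inv]
        exact inv_mem px
    rw [Subgroup.commutator_le]
    intro x hx y hy
    obtain ⟨hxN, px⟩ := key x hx
    obtain ⟨hyN, py⟩ := key y hy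
    obtain ⟨a, ha⟩ := Subgroup.mem_zpowers_iff.1 px
    obtain ⟨b, hb⟩ := Subgroup.mem_zpowers_iff.1 py
    have hxyN : ⁅x, y⁆ ∈ N := by
      show x * y * x⁻¹ * y⁻¹ ∈ N
      exact mul_mem (mul_mem (mul_mem hxN hyN) (inv_mem hxN)) (inv_mem hyN)
    have hc : q ⟨⁅x, y⁆, hxyN⟩ = 1 := by
      have h1 : (⟨⁅x, y⁆, hxyN⟩ : N) = ⁅(⟨x, hxN⟩ : N), ⟨y, hyN⟩⁆ := rfl
      rw [h1, map_commutatorElement, ← ha, ← hb]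
      exact commutatorElement_eq_one_iff_commute.2 ((Commute.refl t).zpow_zpow a b)
    exact Subgroup.mem_subgroupOf.1 ((QuotientGroup.eq_one_iff _).1 hc)
  have hXc : IsMulCommutative ↥(R ⊔ Subgroup.zpowers g) := by
    by_contra hnc
    exact hr (mem_pi1_of_commutator_le hrp hR hcomm hnc)
  rw [Subgroup.mem_centralizer_iff]
  intro m hm
  have hmX : m ∈ R ⊔ Subgroup.zpowers g := Subgroup.mem_sup_left hm
  have := hXc.is_comm.comm ⟨m, hmX⟩ ⟨g, hgX⟩
  exact congrArg Subtype.val this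

lemma exists_ncomp {r : ℕ} (hrp : r.Prime) (hr : r ∉ pi1 G) :
    ∃ N : Subgroup G, N.Normal ∧ ¬ r ∣ Nat.card N ∧ ∃ n, N.index = r ^ n := by
  haveI := Fact.mk hrp
  obtain ⟨R⟩ : Nonempty (Sylow r G) := Sylow.nonempty
  have hNC : Subgroup.normalizer ((R : Subgroup G) : Set G) ≤ Subgroup.centralizer ((R : Subgroup G) : Set G) :=
    norm_le_cent hrp hr R.isPGroup'
  refine ⟨(MonoidHom.transferSylow R hNC).ker, inferInstance,
    MonoidHom.not_dvd_card_ker_transferSylow R hNC, ?_⟩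
  have hcompl := (MonoidHom.ker_transferSylow_isComplement' R hNC).symm
  rw [hcompl.index_eq_card]
  exact IsPGroup.iff_card.1 R.isPGroup'

lemma comm_of_no_pi1 {H : Type*} [Group H] [Finite H]
    (h : ∀ p : ℕ, p.Prime → p ∣ Nat.card H → p ∉ pi1 H) (a b : H) : a * b = b * a := by
  have hD : Nat.card ↥⁅(⊤ : Subgroup H), (⊤ : Subgroup H)⁆ = 1 := by
    by_contra hne
    obtain ⟨s, hs, hsd⟩ := Nat.exists_prime_and_dvd hne
    have hsG : s ∣ Nat.card H := hsd.trans (Subgroup.card_subgroup_dvd_card _)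
    have hs1 : s ∉ pi1 H := h s hs hsG
    haveI := Fact.mk hs
    obtain ⟨R⟩ : Nonempty (Sylow s H) := Sylow.nonempty
    have hNC : Subgroup.normalizer ((R : Subgroup H) : Set H) ≤ Subgroup.centralizer ((R : Subgroup H) : Set H) :=
      norm_le_cent hs hs1 R.isPGroup'
    set N := (MonoidHom.transferSylow R hNC).ker with hN
    have hcompl := MonoidHom.ker_transferSylow_isComplement' R hNC
    have hDN : ⁅(⊤ : Subgroup H), (⊤ : Subgroup H)⁆ ≤ N := by
      rw [Subgroup.commutator_le]
      intro x _ y _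
      have hRc : ∀ u v : H, u ∈ (R : Subgroup H) → v ∈ (R : Subgroup H) → u * v = v * u :=
        fun u v hu hv =>
          Subgroup.mem_centralizer_iff.1 (hNC (Subgroup.le_normalizer hv)) u hu
      have hsurj : ∀ g : H,
          (QuotientGroup.mk' N) g ∈ Set.range ((QuotientGroup.mk' N) ∘ (Subgroup.subtype (R : Subgroup H))) := by
        intro g
        obtain ⟨⟨n, u⟩, hnu⟩ := hcompl.2 g
        refine ⟨⟨u.1, u.2⟩, ?_⟩
        have hn1 : (QuotientGroup.mk' N) (n : H) = 1 := (QuotientGroup.eq_one_iff _).2 n.2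
        have h1 : (QuotientGroup.mk' N) ((n : H) * (u : H)) = (QuotientGroup.mk' N) (u : H) := by
          rw [map_mul, hn1, one_mul]
        simp only [Function.comp_apply, Subgroup.coe_subtype]
        rw [← hnu]
        exact h1.symm
      obtain ⟨u, hu⟩ := hsurj x
      obtain ⟨v, hv⟩ := hsurj y
      have h1 : (QuotientGroup.mk' N) ⁅x, y⁆ = 1 := by
        rw [map_commutatorElement, ← hu, ← hv]
        simp only [Function.comp_apply, Subgroup.coe_subtype]
        rw [← map_commutatorElement]
        rw [commutatorElement_eq_one_iff_mul_comm.2 (hRc u.1 v.1 u.2 v.2), map_one]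
      exact (QuotientGroup.eq_one_iff _).1 h1
    have hcard : s ∣ Nat.card N := hsd.trans (Subgroup.card_dvd_of_le hDN)
    exact MonoidHom.not_dvd_card_ker_transferSylow R hNC hcard
  have hDbot : ⁅(⊤ : Subgroup H), (⊤ : Subgroup H)⁆ = ⊥ := Subgroup.card_eq_one.1 hD
  have hmem := Subgroup.commutator_mem_commutator (Subgroup.mem_top a) (Subgroup.mem_top b)
  rw [hDbot, Subgroup.mem_bot] at hmem
  exact commutatorElement_eq_one_iff_mul_comm.1 hmem

lemma pgroup_le_of_index_pow {N S : Subgroup G} [N.Normal] {r s : ℕ} (hs : s.Prime)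
    (hr : r.Prime) (hsr : s ≠ r) (hidx : ∃ n, N.index = r ^ n) (hS : IsPGroup s S) :
    S ≤ N := by
  obtain ⟨n, hn⟩ := hidx
  intro x hx
  obtain ⟨k, hk⟩ := hS ⟨x, hx⟩
  have hxk : x ^ s ^ k = 1 := by
    have := congrArg Subtype.val hk
    simpa using this
  have h1 : ((QuotientGroup.mk' N) x) ^ s ^ k = 1 := by
    rw [← map_pow, hxk, map_one]
  have h2 : orderOf ((QuotientGroup.mk' N) x) ∣ s ^ k := orderOf_dvd_of_pow_eq_one h1
  have h3 : orderOf ((QuotientGroup.mk' N) x) ∣ r ^ n := by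
    have := orderOf_dvd_natCard ((QuotientGroup.mk' N) x)
    rwa [← Subgroup.index_eq_card, hn] at this
  have hcop : Nat.Coprime (s ^ k) (r ^ n) :=
    ((Nat.coprime_primes hs hr).2 hsr).pow k n
  have h4 : orderOf ((QuotientGroup.mk' N) x) = 1 :=
    Nat.dvd_one.1 (hcop ▸ Nat.dvd_gcd h2 h3)
  have h5 : (QuotientGroup.mk' N) x = 1 := orderOf_eq_one_iff.1 h4
  exact (QuotientGroup.eq_one_iff x).1 h5

lemma pi1_of_pi1_subgroup {A : Subgroup G} {p : ℕ} (hp : p ∈ pi1 ↥A) : p ∈ pi1 G := by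
  obtain ⟨hpp, M, ⟨hM1, hM2⟩, hMp⟩ := hp
  refine ⟨hpp, M.map A.subtype, ⟨?_, ?_⟩, ?_⟩
  · intro hc
    apply hM1
    refine ⟨⟨fun a b => ?_⟩⟩
    have ha : (A.subtype a.1 : G) ∈ M.map A.subtype := ⟨a.1, a.2, rfl⟩
    have hb : (A.subtype b.1 : G) ∈ M.map A.subtype := ⟨b.1, b.2, rfl⟩
    have hcm := hc.is_comm.comm ⟨_, ha⟩ ⟨_, hb⟩
    have h2 : A.subtype (a.1 * b.1) = A.subtype (b.1 * a.1) := by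
      simpa using congrArg Subtype.val hcm
    exact Subtype.ext (A.subtype_injective h2)
  · intro L hL
    have hLA : L ≤ A.subtype.range := hL.le.trans
      ((Subgroup.map_subtype_le M).trans_eq A.range_subtype.symm)
    have hmapL : (L.comap A.subtype).map A.subtype = L := Subgroup.map_comap_eq_self hLA
    have hL0M : L.comap A.subtype < M := by
      have h1 : L.comap A.subtype ≤ M := by
        have := Subgroup.comap_mono (f := A.subtype) hL.le
        rwa [Subgroup.comap_map_eq_self_of_injective A.subtype_injective] at this
      refine lt_of_le_of_ne h1 fun he => ?_
      rw [he] at hmapL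
      exact hL.ne hmapL.symm
    haveI := hM2 (L.comap A.subtype) hL0M
    rw [← hmapL]
    exact Subgroup.map_isMulCommutative (L.comap A.subtype) A.subtype
  · have h1 := hMp.map A.subtype
    rwa [Subgroup.map_commutator] at h1

end Aux

/-- `G = K ⋊ A` with `K` a normal Hall `π₁(G)`-subgroup and `A` an abelian Hall
`π₁(G)'`-subgroup. -/
theorem stmt2 {G : Type*} [Group G] [Finite G] :
    ∃ K A : Subgroup G, K.Normal ∧ IsMulCommutative A ∧
      (∀ r : ℕ, r.Prime → r ∣ Nat.card K → r ∈ pi1 G) ∧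
      (∀ r : ℕ, r.Prime → r ∣ Nat.card A → r ∉ pi1 G) ∧
      K ⊓ A = ⊥ ∧ K ⊔ A = ⊤ := by
  classical
  have hex : ∀ r : {r : ℕ // r.Prime ∧ r ∣ Nat.card G ∧ r ∉ pi1 G},
      ∃ N : Subgroup G, N.Normal ∧ ¬ r.1 ∣ Nat.card N ∧ ∃ n, N.index = r.1 ^ n :=
    fun r => exists_ncomp r.2.1 r.2.2.2
  choose N hN1 hN2 hN3 using hex
  set K : Subgroup G := ⨅ r, N r with hK
  haveI hKnormal : K.Normal := by
    constructor
    intro x hx g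
    rw [Subgroup.mem_iInf] at hx ⊢
    intro r
    exact (hN1 r).conj_mem x (hx r) g
  have hKpi : ∀ r : ℕ, r.Prime → r ∣ Nat.card K → r ∈ pi1 G := by
    intro r hr hdvd
    by_contra hrn
    have hrG : r ∣ Nat.card G := hdvd.trans (Subgroup.card_subgroup_dvd_card K)
    have hKle : K ≤ N ⟨r, hr, hrG, hrn⟩ := iInf_le _ _
    exact hN2 ⟨r, hr, hrG, hrn⟩ (hdvd.trans (Subgroup.card_dvd_of_le hKle))
  have hIdx : ∀ s : ℕ, s.Prime → s ∣ K.index → s ∉ pi1 G := by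
    intro s hs hdvd hmem
    haveI := Fact.mk hs
    obtain ⟨S⟩ : Nonempty (Sylow s G) := Sylow.nonempty
    have hSK : (S : Subgroup G) ≤ K := by
      refine le_iInf fun r => ?_
      haveI := hN1 r
      refine pgroup_le_of_index_pow hs r.2.1 ?_ (hN3 r) S.isPGroup'
      rintro rfl
      exact r.2.2.2 hmem
    have hcard : Nat.card S ∣ Nat.card K := Subgroup.card_dvd_of_le hSK
    rw [S.card_eq_multiplicity] at hcard
    have hGne : Nat.card G ≠ 0 := Nat.card_pos.ne'
    have hdd := mul_dvd_mul hcard hdvd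
    rw [Subgroup.card_mul_index] at hdd
    rw [← pow_succ] at hdd
    exact Nat.pow_succ_factorization_not_dvd hGne hs hdd
  have hcop : Nat.Coprime (Nat.card K) K.index := by
    by_contra hg
    obtain ⟨p, hp, hpd⟩ := Nat.exists_prime_and_dvd hg
    exact hIdx p hp (hpd.trans (Nat.gcd_dvd_right _ _))
      (hKpi p hp (hpd.trans (Nat.gcd_dvd_left _ _)))
  obtain ⟨A, hA⟩ := Subgroup.exists_right_complement'_of_coprime hcop
  have hcardA : Nat.card A = K.index := (hA.symm.index_eq_card).symm
  have hApi : ∀ r : ℕ, r.Prime → r ∣ Nat.card A → r ∉ pi1 G := by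
    intro r hr hd
    exact hIdx r hr (hcardA ▸ hd)
  have hAcomm : IsMulCommutative A := by
    refine ⟨⟨fun a b => ?_⟩⟩
    refine comm_of_no_pi1 (fun p hp hdvd hmem => ?_) a b
    exact hApi p hp hdvd (pi1_of_pi1_subgroup hmem)
  exact ⟨K, A, hKnormal, hAcomm, hKpi, hApi, disjoint_iff.1 hA.disjoint, hA.sup_eq_top⟩
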